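/- In the two-sided stationary setup, let k ≤ ℓ be integers, (a_k,b_k), …, (a_ℓ,b_ℓ) ∈ Δ with c_i = f(a_i) = g(b_i), and suppose P(Z_k = c_k, …, Z_ℓ = c_ℓ) > 0. Then for every m ≥ max(|k|,|ℓ|), P(W^{−m,m}_k = (a_k,b_k), …, W^{−m,m}_ℓ = (a_ℓ,b_ℓ)) = (π_X(a_k)·π_Y(b_k)/π_Z(c_k)) · φ^rev_{m+k}(a_k,b_k) · φ_{m−ℓ}(a_ℓ,b_ℓ) · Π_{i=k+1}^{ℓ} R((a_{i−1},b_{i−1}),(a_i,b_i)). -/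

import Mathlib

open MeasureTheory Filter Topology
open scoped ENNReal Classical

/-- A probability vector on a countable state space. -/
def IsProbVec {U : Type*} (v : U → ℝ≥0∞) : Prop := ∑' u, v u = 1

/-- A row-stochastic matrix on a countable state space. -/
def IsStochastic {U : Type*} (P : U → U → ℝ≥0∞) : Prop := ∀ u, ∑' w, P u w = 1

/-- `μ` is the law on two-sided path space of a stationary time-homogeneous Markov chain with
stationary one-dimensional distribution `π` and transition matrix `P`. -/
def IsStatMarkovChainZ {U : Type*} [MeasurableSpace U]
    (π : U → ℝ≥0∞) (P : U → U → ℝ≥0∞) (μ : Measure (ℤ → U)) : Prop :=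
  IsProbabilityMeasure μ ∧ IsProbVec π ∧ IsStochastic P ∧
    ∀ (t : ℤ) (k : ℕ) (a : ℕ → U),
      μ {ω | ∀ i ≤ k, ω (t + (i : ℤ)) = a i}
        = π (a 0) * ∏ i ∈ Finset.range k, P (a i) (a (i + 1))

/-- The transition matrix of the time reversal: `P^rev(x',x) = π(x) P(x,x') / π(x')`. -/
noncomputable def revMat {U : Type*} (π : U → ℝ≥0∞) (P : U → U → ℝ≥0∞) (x' x : U) : ℝ≥0∞ :=
  π x * P x x' / π x'

/-- `Δ(f,g) = {(a,b) : f a = g b}`. -/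
abbrev Delta {A B C : Type*} (f : A → C) (g : B → C) :=
  {p : A × B // f p.1 = g p.2}

/-- The matrix `R` on `Δ(f,g)`. -/
noncomputable def Rmat {A B C : Type*} (PX : A → A → ℝ≥0∞) (PY : B → B → ℝ≥0∞)
    (PZ : C → C → ℝ≥0∞) (f : A → C) (g : B → C) (d e : Delta f g) : ℝ≥0∞ :=
  if PZ (f d.1.1) (f e.1.1) ≠ 0 then
    PX d.1.1 e.1.1 * PY d.1.2 e.1.2 / PZ (f d.1.1) (f e.1.1)
  else 0

/-- `phim R m = R^m 1`, computed coordinatewise in `[0,∞]`. -/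
noncomputable def phim {D : Type*} (R : D → D → ℝ≥0∞) : ℕ → D → ℝ≥0∞
  | 0 => fun _ => 1
  | m + 1 => fun d => ∑' e, R d e * phim R m e

/-- The conditional probability of the cylinder event `{X_k = a_k, …, X_l = a_l}` given
`f(X_j) = z_j` for `|j| ≤ m`, as a function of the two-sided image trajectory `z`. -/
noncomputable def condCylZ {A C : Type*} [MeasurableSpace A]
    (μ : Measure (ℤ → A)) (f : A → C) (z : ℤ → C) (m : ℕ) (k l : ℤ) (a : ℤ → A) : ℝ≥0∞ :=
  μ {ω | (∀ i : ℤ, k ≤ i → i ≤ l → ω i = a i) ∧ ∀ j : ℤ, j.natAbs ≤ m → f (ω j) = z j}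
    / μ {ω | ∀ j : ℤ, j.natAbs ≤ m → f (ω j) = z j}


namespace S17

noncomputable def ind (p : Prop) : ℝ≥0∞ := if p then 1 else 0

lemma ind_true {p : Prop} (h : p) : ind p = 1 := if_pos h
lemma ind_false {p : Prop} (h : ¬ p) : ind p = 0 := if_neg h
lemma ind_congr {p q : Prop} (h : p ↔ q) : ind p = ind q := by
  by_cases hp : p
  · rw [ind_true hp, ind_true (h.mp hp)]
  · rw [ind_false hp, ind_false (fun hq => hp (h.mpr hq))]
lemma ind_and (p q : Prop) : ind (p ∧ q) = ind p * ind q := by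
  by_cases hp : p <;> by_cases hq : q <;> simp [ind, hp, hq]

section chains
variable {U : Type*}

noncomputable def ch (P : U → U → ℝ≥0∞) : ∀ {s : ℕ}, U → (Fin s → U) → ℝ≥0∞
  | 0, _, _ => 1
  | _ + 1, x0, v => P x0 (v 0) * ch P (v 0) (Fin.tail v)

@[simp] lemma ch_zero (P : U → U → ℝ≥0∞) (x0 : U) (v : Fin 0 → U) : ch P x0 v = 1 := rfl
lemma ch_succ (P : U → U → ℝ≥0∞) {s : ℕ} (x0 : U) (v : Fin (s+1) → U) :
    ch P x0 v = P x0 (v 0) * ch P (v 0) (Fin.tail v) := rfl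

lemma entry_le_one {P : U → U → ℝ≥0∞} (hP : IsStochastic P) (u w : U) : P u w ≤ 1 := by
  calc P u w ≤ ∑' w', P u w' := ENNReal.le_tsum w
  _ = 1 := hP u

lemma ch_le_one {P : U → U → ℝ≥0∞} (hP : IsStochastic P) :
    ∀ {s : ℕ} (x0 : U) (v : Fin s → U), ch P x0 v ≤ 1
  | 0, _, _ => le_refl 1
  | s+1, x0, v => by
      rw [ch_succ]
      exact mul_le_one' (entry_le_one hP _ _) (ch_le_one hP _ _)

lemma ch_cons (P : U → U → ℝ≥0∞) {s : ℕ} (x0 x1 : U) (v : Fin s → U) :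
    ch P x0 (Fin.cons x1 v) = P x0 x1 * ch P x1 v := by
  rw [ch_succ]
  simp [Fin.cons_zero, Fin.tail_cons]

lemma prod_range_eq_ch (P : U → U → ℝ≥0∞) :
    ∀ (s : ℕ) (q : ℕ → U),
      ∏ i ∈ Finset.range s, P (q i) (q (i+1)) = ch P (q 0) (fun i : Fin s => q (i+1))
  | 0, q => by simp
  | s+1, q => by
      rw [Finset.prod_range_succ']
      rw [prod_range_eq_ch P s (fun n => q (n+1))]
      have hw : (fun i : Fin (s+1) => q ((i : ℕ)+1))
          = Fin.cons (q 1) (fun i : Fin s => q ((i : ℕ)+2)) := by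
        funext i
        refine Fin.cases ?_ ?_ i <;> simp [Fin.val_succ]
      rw [hw, ch_cons, mul_comm]

/-- projection onto window of length `s+1` starting at time `t`. -/
def proj (t : ℤ) (s : ℕ) (ω : ℤ → U) : Fin (s+1) → U := fun i => ω (t + ((i : ℕ) : ℤ))

lemma measurable_proj [MeasurableSpace U] (t : ℤ) (s : ℕ) :
    Measurable (proj (U := U) t s) :=
  measurable_pi_lambda _ fun _ => measurable_pi_apply _

noncomputable def wtv (π : U → ℝ≥0∞) (P : U → U → ℝ≥0∞) {s : ℕ} (v : Fin (s+1) → U) : ℝ≥0∞ :=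
  π (v 0) * ch P (v 0) (Fin.tail v)

lemma meas_cyl [MeasurableSpace U] {π : U → ℝ≥0∞} {P : U → U → ℝ≥0∞} {μ : Measure (ℤ → U)}
    (h : IsStatMarkovChainZ π P μ) (t : ℤ) {s : ℕ} (v : Fin (s+1) → U) :
    μ (proj t s ⁻¹' {v}) = wtv π P v := by
  classical
  set e : ℕ → U := fun i => v ⟨min i s, by omega⟩ with he
  have hset : proj t s ⁻¹' {v} = {ω | ∀ i ≤ s, ω (t + (i : ℤ)) = e i} := by
    ext ω
    simp only [Set.mem_preimage, Set.mem_singleton_iff, funext_iff, Set.mem_setOf_eq]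
    constructor
    · intro H i hi
      have h1 := H ⟨i, by omega⟩
      have h2 : (⟨min i s, by omega⟩ : Fin (s+1)) = ⟨i, by omega⟩ := by
        apply Fin.ext; simp; omega
      simp only [he, h2]
      simpa [proj] using h1
    · intro H i
      have h1 := H i (by omega : (i : ℕ) ≤ s)
      have h2 : (⟨min (i : ℕ) s, by omega⟩ : Fin (s+1)) = i := by
        apply Fin.ext; simp; omega
      simpa [proj, he, h2] using h1
  rw [hset, h.2.2.2 t s e]
  rw [prod_range_eq_ch]
  have h0 : e 0 = v 0 := by
    simp only [he]
    congr 1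
  have ht : (fun i : Fin s => e ((i : ℕ) + 1)) = Fin.tail v := by
    funext i
    simp only [he, Fin.tail]
    congr 1
    apply Fin.ext
    simp [Fin.val_succ]
  rw [h0, ht, wtv]

lemma lint_proj [MeasurableSpace U] [MeasurableSingletonClass U] [Countable U]
    {π : U → ℝ≥0∞} {P : U → U → ℝ≥0∞} {μ : Measure (ℤ → U)}
    (h : IsStatMarkovChainZ π P μ) (t : ℤ) {s : ℕ} (G : (Fin (s+1) → U) → ℝ≥0∞) :
    ∫⁻ ω, G (proj t s ω) ∂μ = ∑' v, G v * wtv π P v := by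
  rw [← lintegral_map (measurable_of_countable G) (measurable_proj t s)]
  rw [lintegral_countable']
  refine tsum_congr fun v => ?_
  rw [Measure.map_apply (measurable_proj t s) (measurableSet_singleton v), meas_cyl h]

lemma meas_proj [MeasurableSpace U] [MeasurableSingletonClass U] [Countable U]
    {π : U → ℝ≥0∞} {P : U → U → ℝ≥0∞} {μ : Measure (ℤ → U)}
    (h : IsStatMarkovChainZ π P μ) (t : ℤ) {s : ℕ} (S : Set (Fin (s+1) → U)) :
    μ (proj t s ⁻¹' S) = ∑' v, ind (v ∈ S) * wtv π P v := by
  have h1 : ∀ ω : ℤ → U,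
      ind (proj t s ω ∈ S) = (proj t s ⁻¹' S).indicator (1 : (ℤ → U) → ℝ≥0∞) ω := by
    intro ω; by_cases hω : proj t s ω ∈ S <;> simp [ind, hω]
  have h2 : μ (proj t s ⁻¹' S) = ∫⁻ ω, ind (proj t s ω ∈ S) ∂μ := by
    simp_rw [h1]
    rw [lintegral_indicator_one ((measurable_proj t s) (S.to_countable.measurableSet))]
  exact h2.trans (lint_proj h t (fun v => ind (v ∈ S)))

lemma tsum_ind_eq {C : Type*} {c0 : C} (Q : C → Prop) (hQ : ∀ z, Q z → z = c0) (F : C → ℝ≥0∞) :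
    ∑' z, ind (Q z) * F z = ind (Q c0) * F c0 := by
  by_cases h : Q c0
  · rw [tsum_eq_single c0]
    intro z hz
    rw [ind_false (fun hQz => hz (hQ z hQz)), zero_mul]
  · rw [ind_false h, zero_mul]
    rw [ENNReal.tsum_eq_zero]
    intro z
    by_cases hz : Q z
    · exact absurd (hQ z hz ▸ hz) h
    · rw [ind_false hz, zero_mul]

end chains
end S17



namespace S17

section tsumtools
variable {U V : Type*}

def consE {n : ℕ} {U : Type*} : (U × (Fin n → U)) ≃ (Fin (n+1) → U) where
  toFun p := Fin.cons p.1 p.2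
  invFun v := (v 0, Fin.tail v)
  left_inv p := by simp
  right_inv v := by simp [Fin.cons_self_tail]

@[simp] lemma consE_apply {n : ℕ} (x0 : U) (v : Fin n → U) :
    (consE (x0, v)) = Fin.cons x0 v := rfl

lemma tsum_pair (F : U × V → ℝ≥0∞) : ∑' p, F p = ∑' a, ∑' b, F (a, b) :=
  (tsum_congr fun _ => rfl).trans (ENNReal.tsum_prod (f := fun a b => F (a, b)))

lemma tsum_consE {s : ℕ} (F : (Fin (s+1) → U) → ℝ≥0∞) :
    ∑' v, F v = ∑' x0 : U, ∑' xt : Fin s → U, F (Fin.cons x0 xt) := by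
  rw [← Equiv.tsum_eq (consE (n := s) (U := U)) F, tsum_pair]
  rfl

lemma tsum_fin1 (F : (Fin 1 → U) → ℝ≥0∞) : ∑' v, F v = ∑' x0 : U, F (fun _ => x0) := by
  rw [tsum_consE]
  refine tsum_congr fun x0 => ?_
  rw [tsum_eq_single (fun j : Fin 0 => j.elim0) (fun b hb => absurd (Subsingleton.elim b _) hb)]
  exact congrArg F (funext fun i => Fin.cases rfl (fun j => j.elim0) i)

end tsumtools

section master
variable {A B C : Type*} (f : A → C) (g : B → C)
  (PX : A → A → ℝ≥0∞) (PY : B → B → ℝ≥0∞) (PZ : C → C → ℝ≥0∞)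

noncomputable def MS (pA : ℕ → A → Prop) (pB : ℕ → B → Prop) (τ : A → B → ℝ≥0∞) (s : ℕ) :
    ℝ≥0∞ :=
  ∑' x : Fin (s+1) → A, ∑' y : Fin (s+1) → B, ∑' z : Fin (s+1) → C,
    ind ((∀ i, f (x i) = z i ∧ pA i (x i)) ∧ (∀ i, g (y i) = z i ∧ pB i (y i))) *
      (τ (x 0) (y 0) * ch PX (x 0) (Fin.tail x) * ch PY (y 0) (Fin.tail y) *
        (ch PZ (z 0) (Fin.tail z))⁻¹)

noncomputable def VAL : (ℕ → A → Prop) → (ℕ → B → Prop) → ℕ → A → B → ℝ≥0∞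
  | _, _, 0, _, _ => 1
  | pA, pB, s+1, x, y =>
      ∑' x' : A, ∑' y' : B,
        ind (f x' = g y' ∧ pA 1 x' ∧ pB 1 y') *
          (PX x x' * PY y y' * (PZ (f x) (f x'))⁻¹ *
            VAL (fun i => pA (i+1)) (fun i => pB (i+1)) s x' y')

lemma VAL_zero (pA : ℕ → A → Prop) (pB : ℕ → B → Prop) (x : A) (y : B) :
    VAL f g PX PY PZ pA pB 0 x y = 1 := rfl

lemma VAL_succ (pA : ℕ → A → Prop) (pB : ℕ → B → Prop) (s : ℕ) (x : A) (y : B) :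
    VAL f g PX PY PZ pA pB (s+1) x y
      = ∑' x' : A, ∑' y' : B,
          ind (f x' = g y' ∧ pA 1 x' ∧ pB 1 y') *
            (PX x x' * PY y y' * (PZ (f x) (f x'))⁻¹ *
              VAL f g PX PY PZ (fun i => pA (i+1)) (fun i => pB (i+1)) s x' y') := rfl

lemma MS_eq_VAL (hPZ : IsStochastic PZ) :
    ∀ (s : ℕ) (pA : ℕ → A → Prop) (pB : ℕ → B → Prop) (τ : A → B → ℝ≥0∞),
      MS f g PX PY PZ pA pB τ s
        = ∑' x : A, ∑' y : B,
            ind (f x = g y ∧ pA 0 x ∧ pB 0 y) * (τ x y * VAL f g PX PY PZ pA pB s x y) := by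
  intro s
  induction s with
  | zero =>
    intro pA pB τ
    rw [MS, tsum_fin1]
    refine tsum_congr fun x0 => ?_
    rw [tsum_fin1]
    refine tsum_congr fun y0 => ?_
    rw [tsum_fin1]
    rw [tsum_ind_eq (c0 := f x0) _ (fun z h => (h.1 0).1.symm)]
    have hiff : ((∀ i : Fin (0+1), f x0 = f x0 ∧ pA ((i : ℕ)) x0)
        ∧ (∀ i : Fin (0+1), g y0 = f x0 ∧ pB ((i : ℕ)) y0))
        ↔ (f x0 = g y0 ∧ pA 0 x0 ∧ pB 0 y0) := by
      constructor
      · rintro ⟨h1, h2⟩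
        exact ⟨(h2 0).1.symm, (h1 0).2, (h2 0).2⟩
      · rintro ⟨h1, h2, h3⟩
        refine ⟨fun i => ⟨rfl, ?_⟩, fun i => ⟨h1.symm, ?_⟩⟩
        · have hi : i = 0 := Fin.ext (by omega)
          rw [hi]; exact h2
        · have hi : i = 0 := Fin.ext (by omega)
          rw [hi]; exact h3
    rw [ind_congr hiff, VAL_zero]
    simp
  | succ s IH =>
    intro pA pB τ
    have step1 : MS f g PX PY PZ pA pB τ (s+1)
        = ∑' x0 : A, ∑' xt : Fin (s+1) → A, ∑' y0 : B, ∑' yt : Fin (s+1) → B,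
            ∑' z0 : C, ∑' zt : Fin (s+1) → C,
            ind (((f x0 = z0 ∧ pA 0 x0)
                  ∧ ∀ i : Fin (s+1), f (xt i) = zt i ∧ pA ((i : ℕ)+1) (xt i))
               ∧ ((g y0 = z0 ∧ pB 0 y0)
                  ∧ ∀ i : Fin (s+1), g (yt i) = zt i ∧ pB ((i : ℕ)+1) (yt i))) *
            (τ x0 y0 * (PX x0 (xt 0) * ch PX (xt 0) (Fin.tail xt))
              * (PY y0 (yt 0) * ch PY (yt 0) (Fin.tail yt))
              * (PZ z0 (zt 0) * ch PZ (zt 0) (Fin.tail zt))⁻¹) := by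
      rw [MS, tsum_consE]
      refine tsum_congr fun x0 => ?_
      refine tsum_congr fun xt => ?_
      rw [tsum_consE]
      refine tsum_congr fun y0 => ?_
      refine tsum_congr fun yt => ?_
      rw [tsum_consE]
      refine tsum_congr fun z0 => ?_
      refine tsum_congr fun zt => ?_
      simp only [Fin.cons_zero, Fin.tail_cons, Fin.forall_fin_succ, Fin.cons_succ,
        Fin.val_succ, Fin.val_zero]
      rw [ch_succ PX, ch_succ PY, ch_succ PZ]
    rw [step1]
    have step2 : ∀ (x0 : A) (y0 : B) (xt : Fin (s+1) → A) (yt : Fin (s+1) → B)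
        (zt : Fin (s+1) → C),
        (∑' z0 : C,
          ind (((f x0 = z0 ∧ pA 0 x0)
                ∧ ∀ i : Fin (s+1), f (xt i) = zt i ∧ pA ((i : ℕ)+1) (xt i))
             ∧ ((g y0 = z0 ∧ pB 0 y0)
                ∧ ∀ i : Fin (s+1), g (yt i) = zt i ∧ pB ((i : ℕ)+1) (yt i))) *
          (τ x0 y0 * (PX x0 (xt 0) * ch PX (xt 0) (Fin.tail xt))
            * (PY y0 (yt 0) * ch PY (yt 0) (Fin.tail yt))
            * (PZ z0 (zt 0) * ch PZ (zt 0) (Fin.tail zt))⁻¹))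
        = ind (f x0 = g y0 ∧ pA 0 x0 ∧ pB 0 y0) *
            (τ x0 y0 *
              (ind ((∀ i : Fin (s+1), f (xt i) = zt i ∧ pA ((i : ℕ)+1) (xt i))
                  ∧ (∀ i : Fin (s+1), g (yt i) = zt i ∧ pB ((i : ℕ)+1) (yt i))) *
                ((PX x0 (xt 0) * PY y0 (yt 0) * (PZ (f x0) (f (xt 0)))⁻¹)
                  * ch PX (xt 0) (Fin.tail xt) * ch PY (yt 0) (Fin.tail yt)
                  * (ch PZ (zt 0) (Fin.tail zt))⁻¹))) := by
      intro x0 y0 xt yt zt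
      rw [tsum_ind_eq (c0 := f x0) _ (fun z0 h => h.1.1.1.symm)]
      by_cases hx : ∀ i : Fin (s+1), f (xt i) = zt i ∧ pA ((i : ℕ)+1) (xt i)
      · by_cases hy : ∀ i : Fin (s+1), g (yt i) = zt i ∧ pB ((i : ℕ)+1) (yt i)
        · have hxz : zt 0 = f (xt 0) := ((hx 0).1).symm
          rw [hxz]
          rw [ind_congr (q := (f x0 = g y0 ∧ pA 0 x0 ∧ pB 0 y0))
            ⟨fun h => ⟨h.2.1.1.symm, h.1.1.2, h.2.1.2⟩,
             fun h => ⟨⟨⟨rfl, h.2.1⟩, hx⟩, ⟨⟨h.1.symm, h.2.2⟩, hy⟩⟩⟩,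
            ind_true (⟨hx, hy⟩ : _ ∧ _)]
          rw [ENNReal.mul_inv (Or.inr ((ch_le_one hPZ _ _).trans_lt ENNReal.one_lt_top).ne)
            (Or.inl ((entry_le_one hPZ _ _).trans_lt ENNReal.one_lt_top).ne)]
          ring
        · have e1 : ind (((f x0 = f x0 ∧ pA 0 x0)
              ∧ ∀ i : Fin (s+1), f (xt i) = zt i ∧ pA ((i : ℕ)+1) (xt i))
             ∧ ((g y0 = f x0 ∧ pB 0 y0)
              ∧ ∀ i : Fin (s+1), g (yt i) = zt i ∧ pB ((i : ℕ)+1) (yt i))) = 0 :=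
            ind_false (fun h => hy h.2.2)
          have e2 : ind ((∀ i : Fin (s+1), f (xt i) = zt i ∧ pA ((i : ℕ)+1) (xt i))
              ∧ (∀ i : Fin (s+1), g (yt i) = zt i ∧ pB ((i : ℕ)+1) (yt i))) = 0 :=
            ind_false (fun h => hy h.2)
          rw [e1, e2]
          simp
      · have e1 : ind (((f x0 = f x0 ∧ pA 0 x0)
            ∧ ∀ i : Fin (s+1), f (xt i) = zt i ∧ pA ((i : ℕ)+1) (xt i))
           ∧ ((g y0 = f x0 ∧ pB 0 y0)
            ∧ ∀ i : Fin (s+1), g (yt i) = zt i ∧ pB ((i : ℕ)+1) (yt i))) = 0 :=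
          ind_false (fun h => hx h.1.2)
        have e2 : ind ((∀ i : Fin (s+1), f (xt i) = zt i ∧ pA ((i : ℕ)+1) (xt i))
            ∧ (∀ i : Fin (s+1), g (yt i) = zt i ∧ pB ((i : ℕ)+1) (yt i))) = 0 :=
          ind_false (fun h => hx h.1)
        rw [e1, e2]
        simp
    refine tsum_congr fun x0 => ?_
    rw [ENNReal.tsum_comm]
    refine tsum_congr fun y0 => ?_
    calc (∑' (xt : Fin (s+1) → A) (yt : Fin (s+1) → B) (z0 : C) (zt : Fin (s+1) → C),
        ind (((f x0 = z0 ∧ pA 0 x0)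
              ∧ ∀ i : Fin (s+1), f (xt i) = zt i ∧ pA ((i : ℕ)+1) (xt i))
           ∧ ((g y0 = z0 ∧ pB 0 y0)
              ∧ ∀ i : Fin (s+1), g (yt i) = zt i ∧ pB ((i : ℕ)+1) (yt i))) *
        (τ x0 y0 * (PX x0 (xt 0) * ch PX (xt 0) (Fin.tail xt))
          * (PY y0 (yt 0) * ch PY (yt 0) (Fin.tail yt))
          * (PZ z0 (zt 0) * ch PZ (zt 0) (Fin.tail zt))⁻¹))
        = ∑' (xt : Fin (s+1) → A) (yt : Fin (s+1) → B),
            ind (f x0 = g y0 ∧ pA 0 x0 ∧ pB 0 y0) *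
              (τ x0 y0 * (∑' (zt : Fin (s+1) → C),
                ind ((∀ i : Fin (s+1), f (xt i) = zt i ∧ pA ((i : ℕ)+1) (xt i))
                    ∧ (∀ i : Fin (s+1), g (yt i) = zt i ∧ pB ((i : ℕ)+1) (yt i))) *
                  ((PX x0 (xt 0) * PY y0 (yt 0) * (PZ (f x0) (f (xt 0)))⁻¹)
                    * ch PX (xt 0) (Fin.tail xt) * ch PY (yt 0) (Fin.tail yt)
                    * (ch PZ (zt 0) (Fin.tail zt))⁻¹))) := by
          refine tsum_congr fun xt => tsum_congr fun yt => ?_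
          rw [ENNReal.tsum_comm]
          refine (tsum_congr fun zt => step2 x0 y0 xt yt zt).trans ?_
          rw [ENNReal.tsum_mul_left, ENNReal.tsum_mul_left]
      _ = ind (f x0 = g y0 ∧ pA 0 x0 ∧ pB 0 y0) *
            (τ x0 y0 * MS f g PX PY PZ (fun i => pA (i+1)) (fun i => pB (i+1))
              (fun x1 y1 => PX x0 x1 * PY y0 y1 * (PZ (f x0) (f x1))⁻¹) s) := by
          rw [MS]
          simp only [ENNReal.tsum_mul_left]
      _ = ind (f x0 = g y0 ∧ pA 0 x0 ∧ pB 0 y0)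
            * (τ x0 y0 * VAL f g PX PY PZ pA pB (s+1) x0 y0) := by
          rw [IH, VAL_succ]

end master



lemma tsum_comm4 {α β γ δ : Type*} (F : α → β → γ → δ → ℝ≥0∞) :
    ∑' a, ∑' b, ∑' c, ∑' d, F a b c d = ∑' c, ∑' d, ∑' a, ∑' b, F a b c d := by
  calc ∑' a, ∑' b, ∑' c, ∑' d, F a b c d
      = ∑' a, ∑' c, ∑' b, ∑' d, F a b c d := tsum_congr fun a => ENNReal.tsum_comm
    _ = ∑' c, ∑' a, ∑' b, ∑' d, F a b c d := ENNReal.tsum_comm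
    _ = ∑' c, ∑' a, ∑' d, ∑' b, F a b c d :=
        tsum_congr fun c => tsum_congr fun a => ENNReal.tsum_comm
    _ = ∑' c, ∑' d, ∑' a, ∑' b, F a b c d := tsum_congr fun c => ENNReal.tsum_comm

section master2
variable {A B C : Type*} (f : A → C) (g : B → C)
  (PX : A → A → ℝ≥0∞) (PY : B → B → ℝ≥0∞) (PZ : C → C → ℝ≥0∞)

lemma tsum_delta (G : Delta f g → ℝ≥0∞) :
    ∑' e : Delta f g, G e
      = ∑' x : A, ∑' y : B, (if h : f x = g y then G ⟨(x, y), h⟩ else 0) := by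
  classical
  have hF : ∃ F : A × B → ℝ≥0∞,
      F = fun p : A × B => if h : f p.1 = g p.2 then G ⟨p, h⟩ else 0 := ⟨_, rfl⟩
  obtain ⟨F, hF⟩ := hF
  calc ∑' e : Delta f g, G e
      = ∑' e : Delta f g, F ↑e := by
        refine tsum_congr fun e => ?_
        rw [hF]
        show G e = if h : f (e : A × B).1 = g (e : A × B).2 then G ⟨↑e, h⟩ else 0
        rw [dif_pos e.2]
    _ = ∑' p : A × B, Set.indicator {p : A × B | f p.1 = g p.2} F p :=
        tsum_subtype {p : A × B | f p.1 = g p.2} F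
    _ = ∑' x : A, ∑' y : B, (if h : f x = g y then G ⟨(x, y), h⟩ else 0) := by
        rw [tsum_pair]
        refine tsum_congr fun x => tsum_congr fun y => ?_
        by_cases h : f x = g y
        · rw [Set.indicator_of_mem (by exact h), hF]
        · rw [Set.indicator_of_notMem (by exact h), dif_neg h]

lemma phim_succ {D : Type*} (R : D → D → ℝ≥0∞) (q : ℕ) (d : D) :
    phim R (q+1) d = ∑' e, R d e * phim R q e := rfl

lemma val_free (hcX : ∀ x x' : A, PZ (f x) (f x') = 0 → PX x x' = 0) :
    ∀ (s : ℕ) (pA : ℕ → A → Prop) (pB : ℕ → B → Prop),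
      (∀ i x, pA (i+1) x) → (∀ i y, pB (i+1) y) →
      ∀ (x : A) (y : B) (h : f x = g y),
        VAL f g PX PY PZ pA pB s x y = phim (Rmat PX PY PZ f g) s ⟨(x, y), h⟩ := by
  intro s
  induction s with
  | zero => intro pA pB hA hB x y h; rw [VAL_zero]; rfl
  | succ s IH =>
    intro pA pB hA hB x y h
    rw [VAL_succ, phim_succ, tsum_delta]
    refine tsum_congr fun x' => tsum_congr fun y' => ?_
    by_cases h' : f x' = g y'
    · rw [dif_pos h', ind_true ⟨h', hA 0 x', hB 0 y'⟩, one_mul]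
      rw [IH _ _ (fun i x => hA (i+1) x) (fun i y => hB (i+1) y) x' y' h']
      by_cases hz : PZ (f x) (f x') = 0
      · rw [hcX x x' hz]
        have : Rmat PX PY PZ f g ⟨(x, y), h⟩ ⟨(x', y'), h'⟩ = 0 := by
          rw [Rmat, if_neg (fun hc => hc hz)]
        rw [this]
        simp
      · have : Rmat PX PY PZ f g ⟨(x, y), h⟩ ⟨(x', y'), h'⟩
            = PX x x' * PY y y' * (PZ (f x) (f x'))⁻¹ := by
          rw [Rmat, if_pos (by exact hz), div_eq_mul_inv]
        rw [this]
    · rw [dif_neg h', ind_false (fun hc => h' hc.1), zero_mul]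

lemma val_forced (α : A) (β : B) (hαβ : f α = g β)
    (pA : ℕ → A → Prop) (pB : ℕ → B → Prop)
    (hA : ∀ x, pA 1 x ↔ x = α) (hB : ∀ y, pB 1 y ↔ y = β) (s : ℕ) (x : A) (y : B) :
    VAL f g PX PY PZ pA pB (s+1) x y
      = PX x α * PY y β * (PZ (f x) (f α))⁻¹ *
          VAL f g PX PY PZ (fun i => pA (i+1)) (fun i => pB (i+1)) s α β := by
  rw [VAL_succ]
  rw [tsum_eq_single α ?side1]
  case side1 =>
    intro x' hx'
    rw [ENNReal.tsum_eq_zero]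
    intro y'
    rw [ind_false (fun hc => hx' ((hA x').mp hc.2.1)), zero_mul]
  rw [tsum_eq_single β ?side2]
  case side2 =>
    intro y' hy'
    rw [ind_false (fun hc => hy' ((hB y').mp hc.2.2)), zero_mul]
  rw [ind_true ⟨hαβ, (hA α).mpr rfl, (hB β).mpr rfl⟩, one_mul]

noncomputable def HS (pA : ℕ → A → Prop) (pB : ℕ → B → Prop) (τ : A → B → ℝ≥0∞) (s : ℕ) :
    ℝ≥0∞ :=
  ∑' x : A, ∑' y : B,
    ind (f x = g y ∧ pA 0 x ∧ pB 0 y) * (τ x y * VAL f g PX PY PZ pA pB s x y)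

lemma HS_congr (pA : ℕ → A → Prop) (pB : ℕ → B → Prop) (τ τ' : A → B → ℝ≥0∞)
    (h : ∀ x y, f x = g y → pA 0 x → pB 0 y → τ x y = τ' x y) (s : ℕ) :
    HS f g PX PY PZ pA pB τ s = HS f g PX PY PZ pA pB τ' s := by
  rw [HS, HS]
  refine tsum_congr fun x => tsum_congr fun y => ?_
  by_cases hc : f x = g y ∧ pA 0 x ∧ pB 0 y
  · rw [h x y hc.1 hc.2.1 hc.2.2]
  · rw [ind_false hc, zero_mul, zero_mul]

lemma HS_collapse (pA : ℕ → A → Prop) (pB : ℕ → B → Prop) (τ : A → B → ℝ≥0∞)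
    (α : A) (β : B) (hαβ : f α = g β)
    (hA : ∀ x, pA 0 x ↔ x = α) (hB : ∀ y, pB 0 y ↔ y = β) (s : ℕ) :
    HS f g PX PY PZ pA pB τ s = τ α β * VAL f g PX PY PZ pA pB s α β := by
  rw [HS]
  rw [tsum_eq_single α ?side1]
  case side1 =>
    intro x' hx'
    rw [ENNReal.tsum_eq_zero]
    intro y'
    rw [ind_false (fun hc => hx' ((hA x').mp hc.2.1)), zero_mul]
  rw [tsum_eq_single β ?side2]
  case side2 =>
    intro y' hy'
    rw [ind_false (fun hc => hy' ((hB y').mp hc.2.2)), zero_mul]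
  rw [ind_true ⟨hαβ, (hA α).mpr rfl, (hB β).mpr rfl⟩, one_mul]

end master2


section left
variable {A B C : Type*} (f : A → C) (g : B → C)
  (PX : A → A → ℝ≥0∞) (PY : B → B → ℝ≥0∞) (PZ : C → C → ℝ≥0∞)
  (πX : A → ℝ≥0∞) (πY : B → ℝ≥0∞) (πZ : C → ℝ≥0∞)

lemma key_arith_rev {px px' py py' pz pz' Pxx Pyy Pzz φ : ℝ≥0∞}
    (hpx' : px' ≠ 0) (hpx't : px' ≠ ∞) (hpy' : py' ≠ 0) (hpy't : py' ≠ ∞)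
    (hpz : pz ≠ 0) (hpzt : pz ≠ ∞) (hpz' : pz' ≠ 0) (hpz't : pz' ≠ ∞)
    (hPzzt : Pzz ≠ ∞) :
    px * py * pz⁻¹ * φ * Pxx * Pyy * Pzz⁻¹
      = px' * py' * pz'⁻¹ * ((px * Pxx / px') * (py * Pyy / py') / (pz * Pzz / pz') * φ) := by
  have h1 : (pz * Pzz * pz'⁻¹)⁻¹ = pz⁻¹ * Pzz⁻¹ * pz' := by
    rw [ENNReal.mul_inv (Or.inr (ENNReal.inv_ne_top.mpr hpz'))
        (Or.inl (ENNReal.mul_ne_top hpzt hPzzt)),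
      ENNReal.mul_inv (Or.inl hpz) (Or.inl hpzt), inv_inv]
  simp only [div_eq_mul_inv]
  rw [h1]
  calc px * py * pz⁻¹ * φ * Pxx * Pyy * Pzz⁻¹
      = 1 * 1 * 1 * (px * py * pz⁻¹ * φ * Pxx * Pyy * Pzz⁻¹) := by ring
    _ = (px' * px'⁻¹) * (py' * py'⁻¹) * (pz'⁻¹ * pz')
          * (px * py * pz⁻¹ * φ * Pxx * Pyy * Pzz⁻¹) := by
        rw [ENNReal.mul_inv_cancel hpx' hpx't, ENNReal.mul_inv_cancel hpy' hpy't,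
          ENNReal.inv_mul_cancel hpz' hpz't]
    _ = px' * py' * pz'⁻¹
          * (px * Pxx * px'⁻¹ * (py * Pyy * py'⁻¹) * (pz⁻¹ * Pzz⁻¹ * pz') * φ) := by ring

/-- head weight for the left (reversed) phase -/
noncomputable def TL (q : ℕ) (x : A) (y : B) : ℝ≥0∞ :=
  πX x * πY y * (πZ (f x))⁻¹ *
    (if h : f x = g y then
      phim (Rmat (revMat πX PX) (revMat πY PY) (revMat πZ PZ) f g) q ⟨(x, y), h⟩ else 0)

variable (hπX : ∀ x, πX x ≠ 0) (hπXt : ∀ x, πX x ≠ ∞)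
  (hπY : ∀ y, πY y ≠ 0) (hπYt : ∀ y, πY y ≠ ∞)
  (hπZ : ∀ c, πZ c ≠ 0) (hπZt : ∀ c, πZ c ≠ ∞)
  (hPZt : ∀ c c', PZ c c' ≠ ∞)
  (hcX : ∀ x x', PZ (f x) (f x') = 0 → PX x x' = 0)

include hπX hπXt hπY hπYt hπZ hπZt hPZt hcX in
lemma left_key (x' : A) (y' : B) (h' : f x' = g y') (q : ℕ) :
    (∑' x : A, ∑' y : B, ind (f x = g y) *
        (TL f g PX PY PZ πX πY πZ q x y * PX x x' * PY y y' * (PZ (f x) (f x'))⁻¹))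
      = TL f g PX PY PZ πX πY πZ (q+1) x' y' := by
  classical
  calc (∑' x : A, ∑' y : B, ind (f x = g y) *
        (TL f g PX PY PZ πX πY πZ q x y * PX x x' * PY y y' * (PZ (f x) (f x'))⁻¹))
      = ∑' x : A, ∑' y : B, πX x' * πY y' * (πZ (f x'))⁻¹ *
          (if h : f x = g y then
            Rmat (revMat πX PX) (revMat πY PY) (revMat πZ PZ) f g ⟨(x', y'), h'⟩ ⟨(x, y), h⟩
              * phim (Rmat (revMat πX PX) (revMat πY PY) (revMat πZ PZ) f g) q ⟨(x, y), h⟩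
           else 0) := by
        refine tsum_congr fun x => tsum_congr fun y => ?_
        by_cases h : f x = g y
        · rw [ind_true h, one_mul, dif_pos h, TL, dif_pos h]
          by_cases hz : PZ (f x) (f x') = 0
          · have hr : Rmat (revMat πX PX) (revMat πY PY) (revMat πZ PZ) f g
                ⟨(x', y'), h'⟩ ⟨(x, y), h⟩ = 0 := by
              rw [Rmat, if_neg]
              intro hc
              apply hc
              rw [revMat, hz, mul_zero, ENNReal.zero_div]
            rw [hcX x x' hz, hr]
            simp
          · have hrne : revMat πZ PZ (f x') (f x) ≠ 0 := by
              rw [revMat]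
              intro hc
              rcases ENNReal.div_eq_zero_iff.mp hc with hc1 | hc2
              · rcases mul_eq_zero.mp hc1 with hc3 | hc4
                · exact hπZ _ hc3
                · exact hz hc4
              · exact hπZt _ hc2
            have hr : Rmat (revMat πX PX) (revMat πY PY) (revMat πZ PZ) f g
                ⟨(x', y'), h'⟩ ⟨(x, y), h⟩
                = revMat πX PX x' x * revMat πY PY y' y / revMat πZ PZ (f x') (f x) := by
              rw [Rmat, if_pos (by exact hrne)]
            rw [hr, revMat, revMat, revMat]
            exact key_arith_rev (hπX x') (hπXt x') (hπY y') (hπYt y') (hπZ (f x)) (hπZt (f x))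
              (hπZ (f x')) (hπZt (f x')) (hPZt (f x) (f x'))
        · rw [ind_false h, dif_neg h, zero_mul, mul_zero]
    _ = πX x' * πY y' * (πZ (f x'))⁻¹ *
          ∑' e : Delta f g,
            (Rmat (revMat πX PX) (revMat πY PY) (revMat πZ PZ) f g ⟨(x', y'), h'⟩ e
              * phim (Rmat (revMat πX PX) (revMat πY PY) (revMat πZ PZ) f g) q e) := by
        simp only [ENNReal.tsum_mul_left]
        exact congrArg _ (tsum_delta f g
          (fun e => Rmat (revMat πX PX) (revMat πY PY) (revMat πZ PZ) f g ⟨(x', y'), h'⟩ e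
            * phim (Rmat (revMat πX PX) (revMat πY PY) (revMat πZ PZ) f g) q e)).symm
    _ = TL f g PX PY PZ πX πY πZ (q+1) x' y' := by
        rw [TL, dif_pos h', phim_succ]

end left

section left2
variable {A B C : Type*} (f : A → C) (g : B → C)
  (PX : A → A → ℝ≥0∞) (PY : B → B → ℝ≥0∞) (PZ : C → C → ℝ≥0∞)
  (πX : A → ℝ≥0∞) (πY : B → ℝ≥0∞) (πZ : C → ℝ≥0∞)

lemma VAL_congr : ∀ (s : ℕ) (pA pA' : ℕ → A → Prop) (pB pB' : ℕ → B → Prop),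
    (∀ i x, pA i x ↔ pA' i x) → (∀ i y, pB i y ↔ pB' i y) →
    ∀ x y, VAL f g PX PY PZ pA pB s x y = VAL f g PX PY PZ pA' pB' s x y := by
  intro s
  induction s with
  | zero => intros; rw [VAL_zero, VAL_zero]
  | succ s IH =>
    intro pA pA' pB pB' hA hB x y
    rw [VAL_succ, VAL_succ]
    refine tsum_congr fun x' => tsum_congr fun y' => ?_
    rw [ind_congr (and_congr Iff.rfl (and_congr (hA 1 x') (hB 1 y'))),
      IH _ _ _ _ (fun i x => hA (i+1) x) (fun i y => hB (i+1) y) x' y']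

lemma HS_congr_full (pA pA' : ℕ → A → Prop) (pB pB' : ℕ → B → Prop) (τ : A → B → ℝ≥0∞)
    (s : ℕ) (hA : ∀ i x, pA i x ↔ pA' i x) (hB : ∀ i y, pB i y ↔ pB' i y) :
    HS f g PX PY PZ pA pB τ s = HS f g PX PY PZ pA' pB' τ s := by
  rw [HS, HS]
  refine tsum_congr fun x => tsum_congr fun y => ?_
  rw [ind_congr (and_congr Iff.rfl (and_congr (hA 0 x) (hB 0 y))),
    VAL_congr f g PX PY PZ s pA pA' pB pB' hA hB x y]

variable (hπX : ∀ x, πX x ≠ 0) (hπXt : ∀ x, πX x ≠ ∞)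
  (hπY : ∀ y, πY y ≠ 0) (hπYt : ∀ y, πY y ≠ ∞)
  (hπZ : ∀ c, πZ c ≠ 0) (hπZt : ∀ c, πZ c ≠ ∞)
  (hPZt : ∀ c c', PZ c c' ≠ ∞)
  (hcX : ∀ x x', PZ (f x) (f x') = 0 → PX x x' = 0)

include hπX hπXt hπY hπYt hπZ hπZt hPZt hcX in
lemma HS_left_step (pA : ℕ → A → Prop) (pB : ℕ → B → Prop)
    (hA0 : ∀ x, pA 0 x) (hB0 : ∀ y, pB 0 y) (q s : ℕ) :
    HS f g PX PY PZ pA pB (TL f g PX PY PZ πX πY πZ q) (s+1)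
      = HS f g PX PY PZ (fun i => pA (i+1)) (fun i => pB (i+1))
          (TL f g PX PY PZ πX πY πZ (q+1)) s := by
  rw [HS, HS]
  calc ∑' x, ∑' y, ind (f x = g y ∧ pA 0 x ∧ pB 0 y) *
        (TL f g PX PY PZ πX πY πZ q x y * VAL f g PX PY PZ pA pB (s+1) x y)
      = ∑' x, ∑' y, ∑' x', ∑' y',
          ind (f x' = g y' ∧ pA 1 x' ∧ pB 1 y') *
            ((ind (f x = g y) * (TL f g PX PY PZ πX πY πZ q x y * PX x x' * PY y y'
                * (PZ (f x) (f x'))⁻¹))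
              * VAL f g PX PY PZ (fun i => pA (i+1)) (fun i => pB (i+1)) s x' y') := by
        refine tsum_congr fun x => tsum_congr fun y => ?_
        rw [VAL_succ, ← mul_assoc, ← ENNReal.tsum_mul_left]
        refine tsum_congr fun x' => ?_
        rw [← ENNReal.tsum_mul_left]
        refine tsum_congr fun y' => ?_
        by_cases h : f x = g y
        · rw [ind_true ⟨h, hA0 x, hB0 y⟩, ind_true h]
          ring
        · rw [ind_false (fun hc : f x = g y ∧ pA 0 x ∧ pB 0 y => h hc.1), ind_false h]
          ring
    _ = ∑' x', ∑' y', ∑' x, ∑' y,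
          ind (f x' = g y' ∧ pA 1 x' ∧ pB 1 y') *
            ((ind (f x = g y) * (TL f g PX PY PZ πX πY πZ q x y * PX x x' * PY y y'
                * (PZ (f x) (f x'))⁻¹))
              * VAL f g PX PY PZ (fun i => pA (i+1)) (fun i => pB (i+1)) s x' y') :=
        tsum_comm4 _
    _ = ∑' x', ∑' y',
          ind (f x' = g y' ∧ pA 1 x' ∧ pB 1 y') *
            (TL f g PX PY PZ πX πY πZ (q+1) x' y'
              * VAL f g PX PY PZ (fun i => pA (i+1)) (fun i => pB (i+1)) s x' y') := by
        refine tsum_congr fun x' => tsum_congr fun y' => ?_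
        by_cases h' : f x' = g y' ∧ pA 1 x' ∧ pB 1 y'
        · rw [ind_true h']
          simp only [one_mul, ENNReal.tsum_mul_left, ENNReal.tsum_mul_right]
          rw [left_key f g PX PY PZ πX πY πZ hπX hπXt hπY hπYt hπZ hπZt hPZt hcX x' y' h'.1 q]
        · rw [ind_false h']
          simp

include hπX hπXt hπY hπYt hπZ hπZt hPZt hcX in
lemma HS_left_iter :
    ∀ (n : ℕ) (pA : ℕ → A → Prop) (pB : ℕ → B → Prop) (q s : ℕ),
      (∀ j x, j < n → pA j x) → (∀ j y, j < n → pB j y) →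
      HS f g PX PY PZ pA pB (TL f g PX PY PZ πX πY πZ q) (n + s)
        = HS f g PX PY PZ (fun i => pA (i + n)) (fun i => pB (i + n))
            (TL f g PX PY PZ πX πY πZ (q + n)) s := by
  intro n
  induction n with
  | zero =>
    intro pA pB q s hA hB
    simp only [Nat.zero_add, Nat.add_zero]
  | succ n IHn =>
    intro pA pB q s hA hB
    rw [show n + 1 + s = n + s + 1 from by omega]
    rw [HS_left_step f g PX PY PZ πX πY πZ hπX hπXt hπY hπYt hπZ hπZt hPZt hcX pA pB
      (fun x => hA 0 x (Nat.succ_pos n)) (fun y => hB 0 y (Nat.succ_pos n)) q (n+s)]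
    rw [IHn (fun i => pA (i+1)) (fun i => pB (i+1)) (q+1) s
      (fun j x hj => hA (j+1) x (by omega)) (fun j y hj => hB (j+1) y (by omega))]
    rw [show q + 1 + n = q + (n+1) from by omega]
    exact HS_congr_full f g PX PY PZ _ _ _ _ _ s
      (fun i x => Iff.rfl) (fun i y => Iff.rfl)

end left2
end S17


/-- **Joint distribution of `W^{-m,m}_k, …, W^{-m,m}_l` when `m ≥ max(|k|,|l|)`.** The coupling
`W^{-m,m}` is obtained by conditioning the two-sided chains `X̄` and `Ȳ`, conditionally
independently given `Z`, on agreeing with `Z` under `f`, `g` on the window `[-m,m]`.  Its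
cylinder probability `P(W^{-m,m}_k = (a_k,b_k), …, W^{-m,m}_l = (a_l,b_l))`, which by
construction equals the `μ_Z`-expectation of the product of conditional probabilities, equals
`(π_X(a_k) π_Y(b_k) / π_Z(c_k)) * φ^rev_{m+k}(a_k,b_k) * φ_{m-l}(a_l,b_l)
  * Π_{i=k+1}^{l} R((a_{i-1},b_{i-1}),(a_i,b_i))`. -/
theorem statement_17
    {A B C : Type*} [Countable A] [Countable B] [Countable C]
    [MeasurableSpace A] [MeasurableSingletonClass A]
    [MeasurableSpace B] [MeasurableSingletonClass B]
    [MeasurableSpace C] [MeasurableSingletonClass C]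
    (πX : A → ℝ≥0∞) (PX : A → A → ℝ≥0∞) (μX : Measure (ℤ → A))
    (πY : B → ℝ≥0∞) (PY : B → B → ℝ≥0∞) (μY : Measure (ℤ → B))
    (πZ : C → ℝ≥0∞) (PZ : C → C → ℝ≥0∞) (μZ : Measure (ℤ → C))
    (f : A → C) (g : B → C)
    (hX : IsStatMarkovChainZ πX PX μX) (hY : IsStatMarkovChainZ πY PY μY)
    (hZ : IsStatMarkovChainZ πZ PZ μZ)
    (hπX : ∀ a : A, πX a ≠ 0) (hπY : ∀ b : B, πY b ≠ 0) (hπZ : ∀ c : C, πZ c ≠ 0)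
    (hfX : μX.map (fun ω (n : ℤ) => f (ω n)) = μZ)
    (hgY : μY.map (fun ω (n : ℤ) => g (ω n)) = μZ)
    (m : ℕ) (k l : ℤ) (hkl : k ≤ l) (hmk : k.natAbs ≤ m) (hml : l.natAbs ≤ m)
    (a : ℤ → A) (b : ℤ → B)
    (hΔ : ∀ i : ℤ, f (a i) = g (b i))
    (hpos : μZ {ω | ∀ i : ℤ, k ≤ i → i ≤ l → ω i = f (a i)} ≠ 0) :
    ∫⁻ z, condCylZ μX f z m k l a * condCylZ μY g z m k l b ∂μZ
      = πX (a k) * πY (b k) / πZ (f (a k))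
        * phim (Rmat (revMat πX PX) (revMat πY PY) (revMat πZ PZ) f g)
            ((m : ℤ) + k).toNat ⟨(a k, b k), hΔ k⟩
        * phim (Rmat PX PY PZ f g) ((m : ℤ) - l).toNat ⟨(a l, b l), hΔ l⟩
        * ∏ i ∈ Finset.Icc (k + 1) l,
            Rmat PX PY PZ f g ⟨(a (i - 1), b (i - 1)), hΔ (i - 1)⟩ ⟨(a i, b i), hΔ i⟩ := by
  classical
  open S17 in
  have hf : Measurable f := measurable_of_countable f
  have hg : Measurable g := measurable_of_countable g
  have hF : Measurable (fun ω : ℤ → A => fun n : ℤ => f (ω n)) :=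
    measurable_pi_lambda _ fun n => hf.comp (measurable_pi_apply n)
  have hG : Measurable (fun ω : ℤ → B => fun n : ℤ => g (ω n)) :=
    measurable_pi_lambda _ fun n => hg.comp (measurable_pi_apply n)
  have hπXt : ∀ x, πX x ≠ ∞ :=
    fun x => (((ENNReal.le_tsum x).trans (le_of_eq hX.2.1)).trans_lt ENNReal.one_lt_top).ne
  have hπYt : ∀ y, πY y ≠ ∞ :=
    fun y => (((ENNReal.le_tsum y).trans (le_of_eq hY.2.1)).trans_lt ENNReal.one_lt_top).ne
  have hπZle : ∀ c, πZ c ≤ 1 := fun c => (ENNReal.le_tsum c).trans (le_of_eq hZ.2.1)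
  have hπZt : ∀ c, πZ c ≠ ∞ := fun c => ((hπZle c).trans_lt ENNReal.one_lt_top).ne
  have hPZt : ∀ c c', PZ c c' ≠ ∞ :=
    fun c c' => ((S17.entry_le_one hZ.2.2.1 c c').trans_lt ENNReal.one_lt_top).ne
  -- compatibility: PZ (f x) (f x') = 0 → PX x x' = 0
  have hcX : ∀ x x' : A, PZ (f x) (f x') = 0 → PX x x' = 0 := by
    intro x x' hz
    have e1 : μZ (S17.proj (0:ℤ) 1 ⁻¹' ({![f x, f x']} : Set (Fin 2 → C)))
        = S17.wtv πZ PZ ![f x, f x'] := S17.meas_cyl hZ 0 ![f x, f x']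
    have ewt : S17.wtv πZ PZ ![f x, f x'] = πZ (f x) * (PZ (f x) (f x') * 1) := by
      rw [S17.wtv, S17.ch_succ]
      simp [Fin.tail]
    have e2 : (fun ω : ℤ → A => fun n : ℤ => f (ω n)) ⁻¹'
          (S17.proj (0:ℤ) 1 ⁻¹' ({![f x, f x']} : Set (Fin 2 → C)))
        = S17.proj (0:ℤ) 1 ⁻¹' {v : Fin 2 → A | f (v 0) = f x ∧ f (v 1) = f x'} := by
      ext ω
      simp [S17.proj, funext_iff, Fin.forall_fin_two]
    have e3 : μZ (S17.proj (0:ℤ) 1 ⁻¹' ({![f x, f x']} : Set (Fin 2 → C)))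
        = μX (S17.proj (0:ℤ) 1 ⁻¹' {v : Fin 2 → A | f (v 0) = f x ∧ f (v 1) = f x'}) := by
      rw [← hfX, Measure.map_apply hF
        ((S17.measurable_proj (0:ℤ) 1) (measurableSet_singleton _)), e2]
    have e4 := S17.meas_proj hX (0:ℤ) {v : Fin 2 → A | f (v 0) = f x ∧ f (v 1) = f x'}
    have e5 : (∑' v : Fin 2 → A,
        S17.ind (v ∈ {v : Fin 2 → A | f (v 0) = f x ∧ f (v 1) = f x'}) * S17.wtv πX PX v) = 0 := by
      rw [← e4, ← e3, e1, ewt, hz]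
      simp
    have e6 := ENNReal.tsum_eq_zero.mp e5 ![x, x']
    rw [S17.ind_true (by simp : (![x, x'] : Fin 2 → A) ∈ _), one_mul] at e6
    have e7 : S17.wtv πX PX ![x, x'] = πX x * (PX x x' * 1) := by
      rw [S17.wtv, S17.ch_succ]
      simp [Fin.tail]
    rw [e7] at e6
    rcases mul_eq_zero.mp e6 with h1 | h2
    · exact absurd h1 (hπX x)
    · simpa using h2
  -- nonvanishing of PZ along the fixed middle path
  have hPZmid : ∀ j : ℤ, k ≤ j → j < l → PZ (f (a j)) (f (a (j + 1))) ≠ 0 := by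
    intro j hjk hjl
    set n' : ℕ := (l - k).toNat with hn'
    have hform := hZ.2.2.2 k n' (fun i => f (a (k + (i : ℤ))))
    have hsets : {ω : ℤ → C | ∀ i : ℤ, k ≤ i → i ≤ l → ω i = f (a i)}
        = {ω : ℤ → C | ∀ i ≤ n', ω (k + (i : ℤ)) = f (a (k + (i : ℤ)))} := by
      ext ω
      simp only [Set.mem_setOf_eq]
      constructor
      · intro H i hi
        exact H (k + (i : ℤ)) (by omega) (by omega)
      · intro H i h1 h2
        have h3 := H (i - k).toNat (by omega)
        rw [show k + (((i - k).toNat : ℕ) : ℤ) = i from by omega] at h3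
        exact h3
    rw [hsets, hform] at hpos
    have hprod : (∏ i ∈ Finset.range n',
        PZ (f (a (k + (i : ℤ)))) (f (a (k + ((i + 1 : ℕ) : ℤ))))) ≠ 0 := by
      intro hc
      exact hpos (by rw [hc, mul_zero])
    have h8 := Finset.prod_ne_zero_iff.mp hprod (j - k).toNat (by
      rw [Finset.mem_range]; omega)
    rw [show k + (((j - k).toNat : ℕ) : ℤ) = j from by omega,
      show k + ((((j - k).toNat + 1 : ℕ) : ℕ) : ℤ) = j + 1 from by omega] at h8
    exact h8
  -- window setup
  set t : ℤ := -(m : ℤ) with ht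
  set r : ℕ := 2 * m with hr
  set K : ℕ := (k + m).toNat with hKdef
  set L : ℕ := (l + m).toNat with hLdef
  have hwin : ∀ (φ : ℤ → Prop),
      (∀ j : ℤ, j.natAbs ≤ m → φ j) ↔ (∀ i : Fin (r+1), φ (t + ((i : ℕ) : ℤ))) := by
    intro φ
    constructor
    · intro H i
      apply H
      have := i.isLt
      omega
    · intro H j hj
      have h1 : φ (t + (((j + m).toNat : ℕ) : ℤ)) := H ⟨(j + m).toNat, by omega⟩
      rw [show t + (((j + m).toNat : ℕ) : ℤ) = j from by omega] at h1
      exact h1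
  have hDenX : ∀ z : ℤ → C,
      μX {ω | ∀ j : ℤ, j.natAbs ≤ m → f (ω j) = z j} = S17.wtv πZ PZ (S17.proj t r z) := by
    intro z
    have hset : {ω : ℤ → A | ∀ j : ℤ, j.natAbs ≤ m → f (ω j) = z j}
        = (fun ω : ℤ → A => fun n : ℤ => f (ω n)) ⁻¹'
            (S17.proj t r ⁻¹' ({S17.proj t r z} : Set (Fin (r+1) → C))) := by
      ext ω
      simp only [Set.mem_setOf_eq, Set.mem_preimage, Set.mem_singleton_iff, funext_iff]
      rw [hwin (fun j => f (ω j) = z j)]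
      exact Iff.rfl
    rw [hset, ← Measure.map_apply hF ((S17.measurable_proj t r) (measurableSet_singleton _)),
      hfX]
    exact S17.meas_cyl hZ t (S17.proj t r z)
  have hDenY : ∀ z : ℤ → C,
      μY {ω | ∀ j : ℤ, j.natAbs ≤ m → g (ω j) = z j} = S17.wtv πZ PZ (S17.proj t r z) := by
    intro z
    have hset : {ω : ℤ → B | ∀ j : ℤ, j.natAbs ≤ m → g (ω j) = z j}
        = (fun ω : ℤ → B => fun n : ℤ => g (ω n)) ⁻¹'
            (S17.proj t r ⁻¹' ({S17.proj t r z} : Set (Fin (r+1) → C))) := by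
      ext ω
      simp only [Set.mem_setOf_eq, Set.mem_preimage, Set.mem_singleton_iff, funext_iff]
      rw [hwin (fun j => g (ω j) = z j)]
      exact Iff.rfl
    rw [hset, ← Measure.map_apply hG ((S17.measurable_proj t r) (measurableSet_singleton _)),
      hgY]
    exact S17.meas_cyl hZ t (S17.proj t r z)
  set pA : ℕ → A → Prop :=
    fun i x => k ≤ t + (i:ℤ) → t + (i:ℤ) ≤ l → x = a (t + (i:ℤ)) with hpA
  set pB : ℕ → B → Prop :=
    fun i y => k ≤ t + (i:ℤ) → t + (i:ℤ) ≤ l → y = b (t + (i:ℤ)) with hpB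
  set SX : (Fin (r+1) → C) → Set (Fin (r+1) → A) :=
    fun u => {v | ∀ i : Fin (r+1), f (v i) = u i ∧ pA (i : ℕ) (v i)} with hSX
  set SY : (Fin (r+1) → C) → Set (Fin (r+1) → B) :=
    fun u => {v | ∀ i : Fin (r+1), g (v i) = u i ∧ pB (i : ℕ) (v i)} with hSY
  have hNumX : ∀ z : ℤ → C,
      {ω : ℤ → A | (∀ i : ℤ, k ≤ i → i ≤ l → ω i = a i)
          ∧ ∀ j : ℤ, j.natAbs ≤ m → f (ω j) = z j}
        = S17.proj t r ⁻¹' SX (S17.proj t r z) := by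
    intro z
    ext ω
    simp only [Set.mem_setOf_eq, Set.mem_preimage, hSX]
    constructor
    · rintro ⟨h1, h2⟩ i
      refine ⟨(hwin (fun j => f (ω j) = z j)).mp h2 i, ?_⟩
      intro hk1 hl1
      exact h1 (t + ((i:ℕ):ℤ)) hk1 hl1
    · intro H
      constructor
      · intro i hik hil
        have h2 : pA ((i + m).toNat) (ω (t + (((i + m).toNat : ℕ) : ℤ))) :=
          (H ⟨(i + m).toNat, by omega⟩).2
        rw [hpA] at h2
        rw [show t + (((i + m).toNat : ℕ) : ℤ) = i from by omega] at h2
        exact h2 hik hil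
      · rw [hwin (fun j => f (ω j) = z j)]
        intro i
        exact (H i).1
  have hNumY : ∀ z : ℤ → C,
      {ω : ℤ → B | (∀ i : ℤ, k ≤ i → i ≤ l → ω i = b i)
          ∧ ∀ j : ℤ, j.natAbs ≤ m → g (ω j) = z j}
        = S17.proj t r ⁻¹' SY (S17.proj t r z) := by
    intro z
    ext ω
    simp only [Set.mem_setOf_eq, Set.mem_preimage, hSY]
    constructor
    · rintro ⟨h1, h2⟩ i
      refine ⟨(hwin (fun j => g (ω j) = z j)).mp h2 i, ?_⟩
      intro hk1 hl1
      exact h1 (t + ((i:ℕ):ℤ)) hk1 hl1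
    · intro H
      constructor
      · intro i hik hil
        have h2 : pB ((i + m).toNat) (ω (t + (((i + m).toNat : ℕ) : ℤ))) :=
          (H ⟨(i + m).toNat, by omega⟩).2
        rw [hpB] at h2
        rw [show t + (((i + m).toNat : ℕ) : ℤ) = i from by omega] at h2
        exact h2 hik hil
      · rw [hwin (fun j => g (ω j) = z j)]
        intro i
        exact (H i).1
  have hint : ∀ z : ℤ → C,
      condCylZ μX f z m k l a * condCylZ μY g z m k l b
        = (fun u => (μX (S17.proj t r ⁻¹' SX u) / S17.wtv πZ PZ u)
            * (μY (S17.proj t r ⁻¹' SY u) / S17.wtv πZ PZ u)) (S17.proj t r z) := by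
    intro z
    rw [condCylZ, condCylZ, hNumX z, hNumY z, hDenX z, hDenY z]
  refine (lintegral_congr hint).trans ((S17.lint_proj hZ t
    (fun u => (μX (S17.proj t r ⁻¹' SX u) / S17.wtv πZ PZ u)
      * (μY (S17.proj t r ⁻¹' SY u) / S17.wtv πZ PZ u))).trans ?_)
  -- per-term simplification to NX * NY * inv
  have hfullX : ∀ u : Fin (r+1) → C,
      μX (S17.proj t r ⁻¹' {v : Fin (r+1) → A | ∀ i, f (v i) = u i}) = S17.wtv πZ PZ u := by
    intro u
    have hset : (fun ω : ℤ → A => fun n : ℤ => f (ω n)) ⁻¹' (S17.proj t r ⁻¹' {u})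
        = S17.proj t r ⁻¹' {v : Fin (r+1) → A | ∀ i, f (v i) = u i} := by
      ext ω
      simp [S17.proj, funext_iff]
    rw [← hset, ← Measure.map_apply hF ((S17.measurable_proj t r) (measurableSet_singleton _)),
      hfX]
    exact S17.meas_cyl hZ t u
  have hfullY : ∀ u : Fin (r+1) → C,
      μY (S17.proj t r ⁻¹' {v : Fin (r+1) → B | ∀ i, g (v i) = u i}) = S17.wtv πZ PZ u := by
    intro u
    have hset : (fun ω : ℤ → B => fun n : ℤ => g (ω n)) ⁻¹' (S17.proj t r ⁻¹' {u})
        = S17.proj t r ⁻¹' {v : Fin (r+1) → B | ∀ i, g (v i) = u i} := by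
      ext ω
      simp [S17.proj, funext_iff]
    rw [← hset, ← Measure.map_apply hG ((S17.measurable_proj t r) (measurableSet_singleton _)),
      hgY]
    exact S17.meas_cyl hZ t u
  have hleX : ∀ u, μX (S17.proj t r ⁻¹' SX u) ≤ S17.wtv πZ PZ u := by
    intro u
    rw [← hfullX u]
    refine measure_mono (Set.preimage_mono ?_)
    intro v hv i
    exact (hv i).1
  have hwtle : ∀ u : Fin (r+1) → C, S17.wtv πZ PZ u ≤ 1 :=
    fun u => mul_le_one' (hπZle _) (S17.ch_le_one hZ.2.2.1 _ _)
  have hterm : ∀ u : Fin (r+1) → C,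
      (μX (S17.proj t r ⁻¹' SX u) / S17.wtv πZ PZ u)
          * (μY (S17.proj t r ⁻¹' SY u) / S17.wtv πZ PZ u) * S17.wtv πZ PZ u
        = μX (S17.proj t r ⁻¹' SX u) * μY (S17.proj t r ⁻¹' SY u)
            * (S17.wtv πZ PZ u)⁻¹ := by
    intro u
    by_cases hd : S17.wtv πZ PZ u = 0
    · have h0 : μX (S17.proj t r ⁻¹' SX u) = 0 :=
        le_antisymm (hd ▸ hleX u) zero_le
      rw [hd, h0]
      simp
    · have hdt : S17.wtv πZ PZ u ≠ ∞ := ((hwtle u).trans_lt ENNReal.one_lt_top).ne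
      rw [div_eq_mul_inv, div_eq_mul_inv]
      calc μX (S17.proj t r ⁻¹' SX u) * (S17.wtv πZ PZ u)⁻¹
            * (μY (S17.proj t r ⁻¹' SY u) * (S17.wtv πZ PZ u)⁻¹) * S17.wtv πZ PZ u
          = μX (S17.proj t r ⁻¹' SX u) * μY (S17.proj t r ⁻¹' SY u)
              * (S17.wtv πZ PZ u)⁻¹ * ((S17.wtv πZ PZ u)⁻¹ * S17.wtv πZ PZ u) := by ring
        _ = μX (S17.proj t r ⁻¹' SX u) * μY (S17.proj t r ⁻¹' SY u)
              * (S17.wtv πZ PZ u)⁻¹ := by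
            rw [ENNReal.inv_mul_cancel hd hdt, mul_one]
  refine (tsum_congr (fun u => hterm u)).trans ?_
  -- expand the numerators into path sums and reassemble as the master sum MS
  have hNX : ∀ u : Fin (r+1) → C, μX (S17.proj t r ⁻¹' SX u)
      = ∑' v : Fin (r+1) → A, S17.ind (v ∈ SX u) * S17.wtv πX PX v :=
    fun u => S17.meas_proj hX t (SX u)
  have hNY : ∀ u : Fin (r+1) → C, μY (S17.proj t r ⁻¹' SY u)
      = ∑' w : Fin (r+1) → B, S17.ind (w ∈ SY u) * S17.wtv πY PY w :=
    fun u => S17.meas_proj hY t (SY u)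
  have hstoZ : IsStochastic PZ := hZ.2.2.1
  calc (∑' u : Fin (r+1) → C, μX (S17.proj t r ⁻¹' SX u) * μY (S17.proj t r ⁻¹' SY u)
          * (S17.wtv πZ PZ u)⁻¹)
      = ∑' u : Fin (r+1) → C, ∑' v : Fin (r+1) → A, ∑' w : Fin (r+1) → B,
          (S17.ind (v ∈ SX u) * S17.wtv πX PX v)
            * ((S17.ind (w ∈ SY u) * S17.wtv πY PY w) * (S17.wtv πZ PZ u)⁻¹) := by
        refine tsum_congr fun u => ?_
        rw [hNX u, hNY u, mul_assoc, ← ENNReal.tsum_mul_right]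
        refine tsum_congr fun v => ?_
        rw [← ENNReal.tsum_mul_right, ← ENNReal.tsum_mul_left]
    _ = ∑' v : Fin (r+1) → A, ∑' w : Fin (r+1) → B, ∑' u : Fin (r+1) → C,
          (S17.ind (v ∈ SX u) * S17.wtv πX PX v)
            * ((S17.ind (w ∈ SY u) * S17.wtv πY PY w) * (S17.wtv πZ PZ u)⁻¹) := by
        rw [ENNReal.tsum_comm]
        exact tsum_congr fun v => ENNReal.tsum_comm
    _ = S17.MS f g PX PY PZ pA pB (fun x y => πX x * πY y * (πZ (f x))⁻¹) r := by
        rw [S17.MS]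
        refine tsum_congr fun v => tsum_congr fun w => tsum_congr fun u => ?_
        by_cases hx : v ∈ SX u
        · by_cases hy : w ∈ SY u
          · rw [S17.ind_true hx, S17.ind_true hy, S17.ind_true (⟨hx, hy⟩ :
              (∀ i, f (v i) = u i ∧ pA (i : ℕ) (v i)) ∧ (∀ i, g (w i) = u i ∧ pB (i : ℕ) (w i)))]
            rw [S17.wtv, S17.wtv, S17.wtv]
            rw [ENNReal.mul_inv (Or.inl (hπZ _)) (Or.inl (hπZt _))]
            rw [show u 0 = f (v 0) from (hx 0).1.symm]
            ring
          · rw [S17.ind_false hy, S17.ind_false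
              (p := (∀ i, f (v i) = u i ∧ pA (i : ℕ) (v i))
                ∧ (∀ i, g (w i) = u i ∧ pB (i : ℕ) (w i))) (fun hc => hy hc.2)]
            simp
        · rw [S17.ind_false hx, S17.ind_false
            (p := (∀ i, f (v i) = u i ∧ pA (i : ℕ) (v i))
              ∧ (∀ i, g (w i) = u i ∧ pB (i : ℕ) (w i))) (fun hc => hx hc.1)]
          simp
    _ = πX (a k) * πY (b k) / πZ (f (a k))
        * phim (Rmat (revMat πX PX) (revMat πY PY) (revMat πZ PZ) f g)
            ((m : ℤ) + k).toNat ⟨(a k, b k), hΔ k⟩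
        * phim (Rmat PX PY PZ f g) ((m : ℤ) - l).toNat ⟨(a l, b l), hΔ l⟩
        * ∏ i ∈ Finset.Icc (k + 1) l,
            Rmat PX PY PZ f g ⟨(a (i - 1), b (i - 1)), hΔ (i - 1)⟩ ⟨(a i, b i), hΔ i⟩ := by
        set dd : ℤ → Delta f g := fun i => ⟨(a i, b i), hΔ i⟩ with hdd
        -- single step of the middle phase as an Rmat factor
        have hRstep : ∀ j : ℕ, K ≤ j → j < L →
            PX (a (t + (j:ℤ))) (a (t + ((j+1:ℕ):ℤ))) * PY (b (t + (j:ℤ))) (b (t + ((j+1:ℕ):ℤ)))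
              * (PZ (f (a (t + (j:ℤ)))) (f (a (t + ((j+1:ℕ):ℤ)))))⁻¹
            = Rmat PX PY PZ f g (dd (t + (j:ℤ))) (dd (t + ((j+1:ℕ):ℤ))) := by
          intro j h1 h2
          have hne : PZ (f (a (t + (j:ℤ)))) (f (a (t + ((j+1:ℕ):ℤ)))) ≠ 0 := by
            have h3 := hPZmid (t + (j:ℤ)) (by omega) (by omega)
            rw [show t + (j:ℤ) + 1 = t + ((j+1:ℕ):ℤ) from by push_cast; ring] at h3
            exact h3
          simp only [hdd]
          rw [Rmat, if_pos (by exact hne), div_eq_mul_inv]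
        -- product peeling identity
        have hP : ∀ (j n : ℕ),
            (∏ i ∈ Finset.range (n+1),
              Rmat PX PY PZ f g (dd (t + (j:ℤ) + (i:ℤ))) (dd (t + (j:ℤ) + (i:ℤ) + 1)))
            = Rmat PX PY PZ f g (dd (t + (j:ℤ))) (dd (t + ((j+1:ℕ):ℤ)))
              * ∏ i ∈ Finset.range n,
                  Rmat PX PY PZ f g (dd (t + ((j+1:ℕ):ℤ) + (i:ℤ)))
                    (dd (t + ((j+1:ℕ):ℤ) + (i:ℤ) + 1)) := by
          intro j n
          rw [Finset.prod_range_succ', mul_comm]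
          congr 1
          · rw [show t + (j:ℤ) + ((0:ℕ):ℤ) + 1 = t + ((j+1:ℕ):ℤ) from by push_cast; ring,
              show t + (j:ℤ) + ((0:ℕ):ℤ) = t + (j:ℤ) from by push_cast; ring]
          · refine Finset.prod_congr rfl fun i _ => ?_
            rw [show t + (j:ℤ) + ((i+1:ℕ):ℤ) + 1 = t + ((j+1:ℕ):ℤ) + (i:ℤ) + 1 from by
                push_cast; ring,
              show t + (j:ℤ) + ((i+1:ℕ):ℤ) = t + ((j+1:ℕ):ℤ) + (i:ℤ) from by push_cast; ring]
        -- middle + right phases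
        have hmid : ∀ (n j : ℕ), K ≤ j → j + n = L →
            S17.VAL f g PX PY PZ (fun i => pA (i + j)) (fun i => pB (i + j)) (r - j)
                (a (t + (j:ℤ))) (b (t + (j:ℤ)))
              = (∏ i ∈ Finset.range n,
                  Rmat PX PY PZ f g (dd (t + (j:ℤ) + (i:ℤ))) (dd (t + (j:ℤ) + (i:ℤ) + 1)))
                * phim (Rmat PX PY PZ f g) (r - L) ⟨(a l, b l), hΔ l⟩ := by
          intro n
          induction n with
          | zero =>
            intro j hKj hjL
            have hj : j = L := by omega
            subst hj
            rw [Finset.prod_range_zero, one_mul]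
            rw [show t + ((L:ℕ):ℤ) = l from by omega]
            exact S17.val_free f g PX PY PZ hcX (r - L) _ _
              (fun i x => by simp only [hpA]; intro h1 h2; exfalso; omega)
              (fun i y => by simp only [hpB]; intro h1 h2; exfalso; omega)
              (a l) (b l) (hΔ l)
          | succ n IHn =>
            intro j hKj hjL
            rw [show r - j = (r - (j+1)) + 1 from by omega]
            rw [S17.val_forced f g PX PY PZ (a (t + (j:ℤ) + 1)) (b (t + (j:ℤ) + 1)) (hΔ _)
              (fun i => pA (i + j)) (fun i => pB (i + j))
              (fun x => by
                simp only [hpA]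
                rw [show t + ((1 + j : ℕ) : ℤ) = t + (j:ℤ) + 1 from by push_cast; ring]
                exact ⟨fun H => H (by omega) (by omega), fun h _ _ => h⟩)
              (fun y => by
                simp only [hpB]
                rw [show t + ((1 + j : ℕ) : ℤ) = t + (j:ℤ) + 1 from by push_cast; ring]
                exact ⟨fun H => H (by omega) (by omega), fun h _ _ => h⟩)
              (r - (j+1))]
            rw [S17.VAL_congr f g PX PY PZ (r - (j+1)) _ (fun i => pA (i + (j+1)))
              _ (fun i => pB (i + (j+1)))
              (fun i x => by rw [show i + 1 + j = i + (j+1) from by omega])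
              (fun i y => by rw [show i + 1 + j = i + (j+1) from by omega])
              (a (t + (j:ℤ) + 1)) (b (t + (j:ℤ) + 1))]
            rw [show t + (j:ℤ) + 1 = t + ((j+1:ℕ):ℤ) from by push_cast; ring]
            rw [IHn (j+1) (by omega) (by omega)]
            rw [hP j n, hRstep j (by omega) (by omega)]
            ring
        -- put everything together
        rw [S17.MS_eq_VAL f g PX PY PZ hstoZ r pA pB (fun x y => πX x * πY y * (πZ (f x))⁻¹)]
        have hgoalHS : (∑' x : A, ∑' y : B, S17.ind (f x = g y ∧ pA 0 x ∧ pB 0 y)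
            * ((fun x y => πX x * πY y * (πZ (f x))⁻¹) x y
                * S17.VAL f g PX PY PZ pA pB r x y))
            = S17.HS f g PX PY PZ pA pB (fun x y => πX x * πY y * (πZ (f x))⁻¹) r := rfl
        rw [hgoalHS]
        rw [S17.HS_congr f g PX PY PZ pA pB _ (S17.TL f g PX PY PZ πX πY πZ 0)
          (fun x y hxy _ _ => by rw [S17.TL, dif_pos hxy]; exact (mul_one _).symm) r]
        rw [show r = K + (r - K) from by omega]
        rw [S17.HS_left_iter f g PX PY PZ πX πY πZ hπX hπXt hπY hπYt hπZ hπZt hPZt hcX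
          K pA pB 0 (r - K)
          (fun j x hj => by simp only [hpA]; intro h1 h2; exfalso; omega)
          (fun j y hj => by simp only [hpB]; intro h1 h2; exfalso; omega)]
        rw [S17.HS_collapse f g PX PY PZ _ _ _ (a k) (b k) (hΔ k)
          (fun x => by
            simp only [hpA]
            rw [show t + ((0 + K : ℕ) : ℤ) = k from by omega]
            exact ⟨fun H => H le_rfl hkl, fun h _ _ => h⟩)
          (fun y => by
            simp only [hpB]
            rw [show t + ((0 + K : ℕ) : ℤ) = k from by omega]
            exact ⟨fun H => H le_rfl hkl, fun h _ _ => h⟩) (r - K)]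
        have hmidK := hmid (L - K) K le_rfl (by omega)
        rw [show t + ((K:ℕ):ℤ) = k from by omega] at hmidK
        rw [hmidK]
        rw [S17.TL, dif_pos (hΔ k)]
        have hprodconv : (∏ i ∈ Finset.range (L - K),
              Rmat PX PY PZ f g (dd (k + (i:ℤ))) (dd (k + (i:ℤ) + 1)))
            = ∏ i ∈ Finset.Icc (k + 1) l,
                Rmat PX PY PZ f g ⟨(a (i - 1), b (i - 1)), hΔ (i - 1)⟩ ⟨(a i, b i), hΔ i⟩ := by
          refine Finset.prod_nbij' (fun i : ℕ => k + 1 + (i:ℤ)) (fun j : ℤ => (j - (k+1)).toNat)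
            ?_ ?_ ?_ ?_ ?_
          · intro i hi
            simp only [Finset.mem_range] at hi
            simp only [Finset.mem_Icc]
            omega
          · intro j hj
            simp only [Finset.mem_Icc] at hj
            simp only [Finset.mem_range]
            omega
          · intro i hi
            omega
          · intro j hj
            simp only [Finset.mem_Icc] at hj
            omega
          · intro i hi
            simp only [Finset.mem_range] at hi
            simp only [hdd]
            rw [show k + (i:ℤ) + 1 = k + 1 + (i:ℤ) from by omega,
              show (k + (i:ℤ)) = k + 1 + (i:ℤ) - 1 from by omega]
        rw [hprodconv]
        rw [show ((m:ℤ) + k).toNat = 0 + K from by omega,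
          show ((m:ℤ) - l).toNat = r - L from by omega, div_eq_mul_inv]
        ring
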